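/- Any pure system in a finite-dimensional rational vector space is a finite set. More precisely: any family of pure subgroups of a free abelian group M of finite rank n such that the sum of any two members is pure has cardinality at most 2^n (in fact at most the number of subspaces of (ℤ/2)^n). -/

import Mathlib

/-- Purity: if the quotient is torsion-free, then `k • m ∈ S` implies `m ∈ S`. -/
lemma pure_of_torsionFree {M : Type*} [AddCommGroup M] (S : AddSubgroup M)
    (h : ∀ g : M ⧸ S, g ≠ 0 → ¬IsOfFinAddOrder g) :
    ∀ (k : ℤ) (m : M), k ≠ 0 → k • m ∈ S → m ∈ S := by
  intro k m hk hkm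
  haveI : NoZeroSMulDivisors ℤ (M ⧸ S) := ⟨fun {c x} hcx => by
    by_contra hne
    push_neg at hne
    exact h x hne.2 (isOfFinAddOrder_iff_zsmul_eq_zero.mpr ⟨c, hne.1, hcx⟩)⟩
  have h0 : (k • (QuotientAddGroup.mk' S m) : M ⧸ S) = 0 := by
    rw [← map_zsmul]
    exact (QuotientAddGroup.eq_zero_iff _).mpr hkm
  rcases smul_eq_zero.mp h0 with h1 | h1
  · exact absurd h1 hk
  · exact (QuotientAddGroup.eq_zero_iff m).mp h1

lemma mem_toIntSubmodule {M : Type*} [AddCommGroup M] (S : AddSubgroup M) {x : M} :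
    x ∈ AddSubgroup.toIntSubmodule S ↔ x ∈ S := Iff.rfl

/-- Key lemma: if `S ≤ T`, `S` is pure, and every `t ∈ T` is `s + 2m` with `s ∈ S`, `m ∈ T`,
then `T ≤ S`. -/
lemma key_le {n : ℕ} (S T : Submodule ℤ (Fin n → ℤ)) (hST : S ≤ T)
    (hSpure : ∀ (k : ℤ) (m : Fin n → ℤ), k ≠ 0 → k • m ∈ S → m ∈ S)
    (hdiv : ∀ t ∈ T, ∃ s ∈ S, ∃ m ∈ T, t = s + (2 : ℤ) • m) :
    T ≤ S := by
  set S' : Submodule ℤ T := S.comap T.subtype with hS'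
  haveI hNtf : NoZeroSMulDivisors ℤ (T ⧸ S') := by
    constructor
    intro c x hcx
    by_cases hc : c = 0
    · exact Or.inl hc
    right
    obtain ⟨y, rfl⟩ := Submodule.Quotient.mk_surjective S' x
    rw [← Submodule.Quotient.mk_smul, Submodule.Quotient.mk_eq_zero] at hcx
    rw [Submodule.Quotient.mk_eq_zero]
    exact hSpure c y.val hc hcx
  have hdivN : ∀ x : T ⧸ S', ∃ z : T ⧸ S', x = (2 : ℤ) • z := by
    intro x
    obtain ⟨y, rfl⟩ := Submodule.Quotient.mk_surjective S' x
    obtain ⟨s, hs, m, hm, hy⟩ := hdiv y.val y.2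
    refine ⟨Submodule.Quotient.mk ⟨m, hm⟩, ?_⟩
    have : y = (⟨s, hST hs⟩ : T) + (2 : ℤ) • (⟨m, hm⟩ : T) := by
      ext i; have := congrFun hy i; simpa using this
    rw [this, Submodule.Quotient.mk_add, Submodule.Quotient.mk_smul]
    have : (Submodule.Quotient.mk (⟨s, hST hs⟩ : T) : T ⧸ S') = 0 := by
      rw [Submodule.Quotient.mk_eq_zero]; exact hs
    rw [this, zero_add]
  haveI : Subsingleton (T ⧸ S') := by
    by_contra hns
    haveI : Nontrivial (T ⧸ S') := not_subsingleton_iff_nontrivial.mp hns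
    haveI : Module.Free ℤ (T ⧸ S') := Module.free_of_finite_type_torsion_free'
    let b := Module.Free.chooseBasis ℤ (T ⧸ S')
    obtain ⟨i⟩ := b.index_nonempty
    obtain ⟨z, hz⟩ := hdivN (b i)
    have h1 : (1 : ℤ) = 2 * b.coord i z := by
      have := congrArg (b.coord i) hz
      rwa [b.coord_apply, b.repr_self, Finsupp.single_eq_same, map_smul,
        zsmul_eq_mul] at this
    omega
  intro t ht
  have : (Submodule.Quotient.mk (⟨t, ht⟩ : T) : T ⧸ S') = 0 := Subsingleton.elim _ _
  rw [Submodule.Quotient.mk_eq_zero] at this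
  exact this

theorem pure_system_finite
    (n : ℕ) (𝒰 : Set (AddSubgroup (Fin n → ℤ)))
    (hpure : ∀ S ∈ 𝒰, ∀ g : (Fin n → ℤ) ⧸ S, g ≠ 0 → ¬IsOfFinAddOrder g)
    (hsum : ∀ S ∈ 𝒰, ∀ S' ∈ 𝒰, ∀ g : (Fin n → ℤ) ⧸ (S ⊔ S'), g ≠ 0 → ¬IsOfFinAddOrder g) :
    𝒰.Finite ∧ Nat.card 𝒰 ≤ Nat.card (Submodule (ZMod 2) (Fin n → ZMod 2)) := by
  classical
  set r : (Fin n → ℤ) → (Fin n → ZMod 2) := fun m i => ((m i : ℤ) : ZMod 2) with hr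
  have hradd : ∀ a b, r (a + b) = r a + r b := by
    intro a b; funext i; simp [hr]
  have hrzero : r 0 = 0 := by funext i; simp [hr]
  -- the mod-2 image as a ZMod 2 submodule
  let φ : AddSubgroup (Fin n → ℤ) → Submodule (ZMod 2) (Fin n → ZMod 2) := fun S =>
    { carrier := r '' S
      add_mem' := by
        rintro _ _ ⟨a, ha, rfl⟩ ⟨b, hb, rfl⟩
        exact ⟨a + b, S.add_mem ha hb, (hradd a b).symm ▸ rfl⟩
      zero_mem' := ⟨0, S.zero_mem, hrzero⟩
      smul_mem' := by
        rintro c _ ⟨a, ha, rfl⟩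
        rcases (by decide : ∀ c : ZMod 2, c = 0 ∨ c = 1) c with rfl | rfl
        · exact ⟨0, S.zero_mem, by rw [hrzero, zero_smul]⟩
        · exact ⟨a, ha, by rw [one_smul]⟩ }
  -- injectivity of φ on 𝒰
  have step : ∀ A ∈ 𝒰, ∀ B ∈ 𝒰, φ A = φ B → ∀ t ∈ A ⊔ B, t ∈ A := by
    intro A hA B hB hφAB
    have hApure := pure_of_torsionFree A (hpure A hA)
    have hTpure := pure_of_torsionFree (A ⊔ B) (hsum A hA B hB)
    have hdiv : ∀ t ∈ AddSubgroup.toIntSubmodule (A ⊔ B), ∃ s ∈ AddSubgroup.toIntSubmodule A,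
        ∃ m ∈ AddSubgroup.toIntSubmodule (A ⊔ B), t = s + (2 : ℤ) • m := by
      intro t ht'
      have ht : t ∈ A ⊔ B := (mem_toIntSubmodule _).mp ht'
      obtain ⟨a, ha, b, hb, rfl⟩ := AddSubgroup.mem_sup.mp ht
      have hrb : r b ∈ φ A := by rw [hφAB]; exact ⟨b, hb, rfl⟩
      obtain ⟨s, hs, hrs⟩ := hrb
      have hdvd : ∀ i, (2 : ℤ) ∣ (b i - s i) := by
        intro i
        have h0 : ((b i - s i : ℤ) : ZMod 2) = 0 := by
          have h1 := congrFun hrs i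
          simp only [hr] at h1
          push_cast
          rw [← h1, sub_self]
        exact_mod_cast (ZMod.intCast_zmod_eq_zero_iff_dvd _ 2).mp h0
      set m : Fin n → ℤ := fun i => (b i - s i) / 2 with hm
      have hbm : (2 : ℤ) • m = b - s := by
        funext i
        simp only [hm, Pi.smul_apply, smul_eq_mul, Pi.sub_apply]
        exact Int.mul_ediv_cancel' (hdvd i)
      have h2m : (2 : ℤ) • m ∈ A ⊔ B := by
        rw [hbm]
        exact (A ⊔ B).sub_mem ((le_sup_right : B ≤ A ⊔ B) hb)
          ((le_sup_left : A ≤ A ⊔ B) hs)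
      refine ⟨a + s, (mem_toIntSubmodule _).mpr (A.add_mem ha hs), m,
        (mem_toIntSubmodule _).mpr (hTpure 2 m two_ne_zero h2m), ?_⟩
      rw [hbm]; abel
    have hle := key_le (AddSubgroup.toIntSubmodule A) (AddSubgroup.toIntSubmodule (A ⊔ B))
      (fun x hx => (mem_toIntSubmodule _).mpr
        ((le_sup_left : A ≤ A ⊔ B) ((mem_toIntSubmodule _).mp hx)))
      hApure hdiv
    intro t ht
    exact (mem_toIntSubmodule A).mp
      (hle ((mem_toIntSubmodule _).mpr ht))
  have hinj : ∀ S ∈ 𝒰, ∀ S' ∈ 𝒰, φ S = φ S' → S = S' := by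
    intro S hS S' hS' hφ
    apply le_antisymm
    · intro x hx
      exact step S' hS' S hS hφ.symm x ((le_sup_right : S ≤ S' ⊔ S) hx)
    · intro x hx
      exact step S hS S' hS' hφ x ((le_sup_right : S' ≤ S ⊔ S') hx)
  haveI : Finite (Submodule (ZMod 2) (Fin n → ZMod 2)) :=
    Finite.of_injective (fun p => (p : Set (Fin n → ZMod 2))) SetLike.coe_injective
  have hfinj : Function.Injective (fun S : 𝒰 => φ S.val) := by
    intro a b hab
    exact Subtype.ext (hinj a.val a.2 b.val b.2 hab)
  exact ⟨Set.finite_coe_iff.mp (Finite.of_injective _ hfinj),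
    Nat.card_le_card_of_injective _ hfinj⟩
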